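/- Let G be a 3-γc-critical graph with a minimum cut set S and maximum independent set I such that α(G) ≥ κ(G) + 1, κ(G) < δ(G), and |S \ I| ≤ 1. Then G belongs to the family 𝒢₂(3,3). -/

import Mathlib

open SimpleGraph Finset

variable {V : Type*}

/-- The graph `G` with the extra edge `uv` added. -/
def SimpleGraph.addEdge (G : SimpleGraph V) (u v : V) : SimpleGraph V :=
  G ⊔ SimpleGraph.fromEdgeSet {s(u, v)}

/-- `D` is a connected dominating set of `G`. -/
def SimpleGraph.IsCDS (G : SimpleGraph V) (D : Set V) : Prop :=
  (∀ v : V, v ∈ D ∨ ∃ u ∈ D, G.Adj u v) ∧ (G.induce D).Connected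

/-- The connected domination number. -/
noncomputable def SimpleGraph.cdn [Fintype V] (G : SimpleGraph V) : ℕ :=
  sInf {n | ∃ D : Finset V, D.card = n ∧ G.IsCDS ↑D}

/-- `G` is a `3`-`γ_c`-critical graph. -/
def SimpleGraph.IsCritical3 [Fintype V] (G : SimpleGraph V) : Prop :=
  G.Connected ∧ G.cdn = 3 ∧
    ∀ u v : V, u ≠ v → ¬G.Adj u v → (G.addEdge u v).cdn < 3

/-- `s` is an independent set of `G`. -/
def SimpleGraph.IsIndepSetPW (G : SimpleGraph V) (s : Set V) : Prop :=
  s.Pairwise (fun a b => ¬G.Adj a b)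

/-- The independence number. -/
noncomputable def SimpleGraph.indepNum' [Fintype V] (G : SimpleGraph V) : ℕ :=
  sSup {n | ∃ s : Finset V, G.IsIndepSetPW ↑s ∧ s.card = n}

/-- `S` is a vertex cut: removing it leaves a non-connected graph. -/
def SimpleGraph.IsVertexCut [Fintype V] (G : SimpleGraph V) (S : Finset V) : Prop :=
  ¬(G.induce ((↑S : Set V)ᶜ)).Connected

/-- The vertex connectivity: minimum size of a vertex cut. -/
noncomputable def SimpleGraph.conn [Fintype V] (G : SimpleGraph V) : ℕ :=
  sInf {n | ∃ S : Finset V, S.card = n ∧ G.IsVertexCut S}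

/-- One-sided description of the special edges in the family `𝒢₂(3,3)`. -/
def G2Half {V : Type*} (J1 J2 : Finset V) (u1 u2 w w1 v1 : V) (a b : V) : Prop :=
  (a = v1 ∧ b ∈ J1) ∨
  (a = w1 ∧ (b ∈ J1 ∨ (b ∈ J2 ∧ b ≠ u1) ∨ b = w)) ∨
  (a = w ∧ (b ∈ J1 ∨ (b ∈ J2 ∧ b ≠ u2) ∨ b = w1))

/-- `G` is the graph in the family `𝒢₂(3,3)` built from the given data. -/
def SimpleGraph.G2Witness {V : Type*} (G : SimpleGraph V)
    (J1 J2 : Finset V) (u1 u2 w w1 v1 : V) : Prop :=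
  3 ≤ J1.card ∧ 3 ≤ J2.card ∧ Disjoint J1 J2 ∧
  u1 ∈ J2 ∧ u2 ∈ J2 ∧
  (w ∉ J1 ∧ w ∉ J2) ∧ (w1 ∉ J1 ∧ w1 ∉ J2) ∧ (v1 ∉ J1 ∧ v1 ∉ J2) ∧
  w ≠ w1 ∧ w ≠ v1 ∧ w1 ≠ v1 ∧
  (∀ z : V, z ∈ J1 ∨ z ∈ J2 ∨ z = w ∨ z = w1 ∨ z = v1) ∧
  ∀ a b : V, G.Adj a b ↔ a ≠ b ∧
    ((a ∈ J1 ∧ b ∈ J1) ∨ (a ∈ J2 ∧ b ∈ J2) ∨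
      G2Half J1 J2 u1 u2 w w1 v1 a b ∨ G2Half J1 J2 u1 u2 w w1 v1 b a)

/-- `G` belongs to the family `𝒢₂(3,3)`. -/
def SimpleGraph.IsG2 {V : Type*} (G : SimpleGraph V) : Prop :=
  ∃ (J1 J2 : Finset V) (u1 u2 w w1 v1 : V), G.G2Witness J1 J2 u1 u2 w w1 v1

section Infra

variable (G : SimpleGraph V)

/-- A walk in an induced subgraph stays in a "closed" part. -/
lemma walk_stay {s : Set V} {A : Set V}
    (hcl : ∀ a ∈ A, ∀ b ∈ s, G.Adj a b → b ∈ A) :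
    ∀ {x y : ↥s} (_ : (G.induce s).Walk x y), (x : V) ∈ A → (y : V) ∈ A := by
  intro x y w
  induction w with
  | nil => exact id
  | cons h p ih =>
      intro hx
      exact ih (hcl _ hx _ (Subtype.coe_prop _) h)

lemma not_connected_of_sep {s A B : Set V} (hA : A.Nonempty) (hB : B.Nonempty)
    (hU : A ∪ B = s) (hd : ∀ a ∈ A, a ∉ B)
    (he : ∀ a ∈ A, ∀ b ∈ B, ¬G.Adj a b) : ¬(G.induce s).Connected := by
  intro hc
  obtain ⟨a, ha⟩ := hA
  obtain ⟨b, hb⟩ := hB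
  have has : a ∈ s := hU ▸ Set.mem_union_left _ ha
  have hbs : b ∈ s := hU ▸ Set.mem_union_right _ hb
  obtain ⟨w⟩ := hc.preconnected ⟨a, has⟩ ⟨b, hbs⟩
  have hcl : ∀ x ∈ A, ∀ y ∈ s, G.Adj x y → y ∈ A := by
    intro x hx y hy hxy
    rcases (hU ▸ hy : y ∈ A ∪ B) with h | h
    · exact h
    · exact absurd hxy (he x hx y h)
  have : (b : V) ∈ A := walk_stay G hcl w ha
  exact hd b this hb

lemma sep_of_not_conn {s : Set V} (h : ¬(G.induce s).Connected) (hne : s.Nonempty) :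
    ∃ A B : Set V, A.Nonempty ∧ B.Nonempty ∧ A ∪ B = s ∧ (∀ a ∈ A, a ∉ B) ∧
      ∀ a ∈ A, ∀ b ∈ B, ¬G.Adj a b := by
  rw [connected_iff] at h
  push_neg at h
  have hne' : Nonempty ↥s := hne.to_subtype
  have hnp : ¬(G.induce s).Preconnected := fun hp => (h hp).false hne'.some
  rw [Preconnected] at hnp
  push_neg at hnp
  obtain ⟨x, y, hxy⟩ := hnp
  set A : Set V := {z | ∃ hz : z ∈ s, (G.induce s).Reachable x ⟨z, hz⟩} with hAdef
  set B : Set V := {z | z ∈ s ∧ z ∉ A} with hBdef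
  have hAs : A ⊆ s := fun z hz => hz.1
  refine ⟨A, B, ⟨x, x.2, Reachable.refl x⟩, ⟨y, y.2, fun hy => ?_⟩, ?_, ?_, ?_⟩
  · obtain ⟨hys, r⟩ := hy
    exact hxy (by convert r using 2)
  · apply Set.Subset.antisymm
    · rintro z (hz | hz)
      · exact hAs hz
      · exact hz.1
    · intro z hz
      by_cases hzA : z ∈ A
      · exact Set.mem_union_left _ hzA
      · exact Set.mem_union_right _ ⟨hz, hzA⟩
  · exact fun a ha hb => hb.2 ha
  · rintro a ⟨has, r⟩ b hb hadj
    refine hb.2 ⟨hb.1, r.trans (Adj.reachable ?_)⟩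
    exact hadj

lemma connected_induce_univ (h : G.Connected) : (G.induce (Set.univ : Set V)).Connected := by
  exact Connected.map (induceUnivIso G).symm.toHom (induceUnivIso G).symm.surjective h

lemma connected_induce_pair {a b : V} (hab : G.Adj a b) :
    (G.induce ({a, b} : Set V)).Connected := by
  rw [connected_iff]
  refine ⟨?_, ⟨⟨a, by simp⟩⟩⟩
  intro x y
  have hx := x.2; have hy := y.2
  simp only [Set.mem_insert_iff, Set.mem_singleton_iff] at hx hy
  have key : ∀ (u v : ↥({a, b} : Set V)), (u : V) = a → (v : V) = b → (G.induce _).Reachable u v := by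
    intro u v hu hv
    refine Adj.reachable ?_
    show G.Adj (u : V) (v : V)
    rw [hu, hv]; exact hab
  rcases hx with hx | hx <;> rcases hy with hy | hy
  · have : x = y := Subtype.ext (hx.trans hy.symm); rw [this]
  · exact key x y hx hy
  · exact (key y x hy hx).symm
  · have : x = y := Subtype.ext (hx.trans hy.symm); rw [this]

lemma connected_induce_single (a : V) : (G.induce ({a} : Set V)).Connected := by
  rw [connected_iff]
  refine ⟨?_, ⟨⟨a, by simp⟩⟩⟩
  intro x y
  have : x = y := Subtype.ext (by
    have hx := x.2; have hy := y.2
    simp only [Set.mem_singleton_iff] at hx hy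
    rw [hx, hy])
  rw [this]

lemma adj_of_connected_induce_pair {a b : V} (hne : a ≠ b)
    (h : (G.induce ({a, b} : Set V)).Connected) : G.Adj a b := by
  have ha : a ∈ ({a, b} : Set V) := by simp
  have hb : b ∈ ({a, b} : Set V) := by simp
  obtain ⟨w⟩ := h.preconnected ⟨a, ha⟩ ⟨b, hb⟩
  -- walk from a to b; first step must go to b
  have : ∀ (x y : ↥({a, b} : Set V)) (_ : (G.induce _).Walk x y),
      (x : V) = a → (y : V) = b → G.Adj a b := by
    intro x y w
    induction w with
    | nil => intro hx hy; exact absurd (hx.symm.trans hy) hne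
    | @cons u c v h p ih =>
        intro hx hy
        have hc := c.2
        simp only [Set.mem_insert_iff, Set.mem_singleton_iff] at hc
        rcases hc with hc | hc
        · exact ih hc hy
        · have : G.Adj (u : V) (c : V) := h
          rw [hx, hc] at this; exact this
  exact this _ _ w rfl rfl

section FinCDS
variable [Fintype V] [DecidableEq V]

lemma isCDS_univ (h : G.Connected) : G.IsCDS ↑(Finset.univ : Finset V) := by
  constructor
  · intro v; left; simp
  · rw [Finset.coe_univ]; exact connected_induce_univ G h

lemma cdn_le_card {D : Finset V} (h : G.IsCDS ↑D) : G.cdn ≤ D.card :=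
  Nat.sInf_le ⟨D, rfl, h⟩

lemma three_le_of_cds (h3 : G.cdn = 3) {D : Finset V} (h : G.IsCDS ↑D) : 3 ≤ D.card :=
  h3 ▸ cdn_le_card G h

lemma no_one_cds (h3 : G.cdn = 3) (a : V) (hdom : ∀ z, z ≠ a → G.Adj a z) : False := by
  have hcds : G.IsCDS ↑({a} : Finset V) := by
    constructor
    · intro v
      by_cases hv : v = a
      · left; simp [hv]
      · right; exact ⟨a, by simp, hdom v hv⟩
    · rw [Finset.coe_singleton]; exact connected_induce_single G a
  have := three_le_of_cds G h3 hcds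
  simp at this

lemma no_two_cds (h3 : G.cdn = 3) {a b : V} (hab : G.Adj a b)
    (hdom : ∀ z, z ≠ a → z ≠ b → G.Adj a z ∨ G.Adj b z) : False := by
  have hcds : G.IsCDS ↑({a, b} : Finset V) := by
    constructor
    · intro v
      by_cases hva : v = a
      · left; simp [hva]
      by_cases hvb : v = b
      · left; simp [hvb]
      · rcases hdom v hva hvb with h | h
        · exact Or.inr ⟨a, by simp, h⟩
        · exact Or.inr ⟨b, by simp, h⟩
    · rw [Finset.coe_insert, Finset.coe_singleton]
      exact connected_induce_pair G hab
  have := three_le_of_cds G h3 hcds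
  rw [Finset.card_insert_of_notMem (by simp [hab.ne]), Finset.card_singleton] at this
  omega

lemma addEdge_adj {u v a b : V} :
    (G.addEdge u v).Adj a b ↔ G.Adj a b ∨ ((a = u ∧ b = v ∨ a = v ∧ b = u) ∧ a ≠ b) := by
  unfold SimpleGraph.addEdge
  rw [sup_adj, fromEdgeSet_adj]
  simp [Sym2.eq_iff]

/-- The key pair condition: `{u,x}` dominates `G - v`, with `u x` adjacent. -/
def HalfT (G : SimpleGraph V) (u v : V) : Prop :=
  ∃ x, x ≠ u ∧ x ≠ v ∧ G.Adj u x ∧ ¬G.Adj v x ∧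
    ∀ z, z ≠ u → z ≠ v → z ≠ x → (G.Adj u z ∨ G.Adj x z)

lemma trichotomy (hG : G.IsCritical3) {u v : V} (hne : u ≠ v) (hna : ¬G.Adj u v) :
    (∀ z, z ≠ u → z ≠ v → (G.Adj u z ∨ G.Adj v z)) ∨ HalfT G u v ∨ HalfT G v u := by
  obtain ⟨hconn, h3, hcrit⟩ := hG
  have hlt := hcrit u v hne hna
  have hconn' : (G.addEdge u v).Connected := hconn.mono le_sup_left
  have hne' : {n | ∃ D : Finset V, D.card = n ∧ (G.addEdge u v).IsCDS ↑D}.Nonempty :=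
    ⟨(Finset.univ : Finset V).card, Finset.univ, rfl, isCDS_univ _ hconn'⟩
  obtain ⟨D, hDcard, hDdom, hDconn⟩ := Nat.sInf_mem hne'
  rw [SimpleGraph.cdn, ← hDcard] at hlt
  have hDne : D.Nonempty := by
    obtain ⟨⟨d, hd⟩⟩ := hDconn.nonempty
    exact ⟨d, by simpa using hd⟩
  have hD12 : D.card = 1 ∨ D.card = 2 := by
    have := Finset.card_pos.mpr hDne; omega
  -- helper: a CDS of G.addEdge avoiding the new edge gives a CDS of G
  rcases hD12 with h1 | h2
  · -- singleton
    obtain ⟨d, hd⟩ := Finset.card_eq_one.mp h1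
    subst hd
    have hdom : ∀ z, z ≠ d → (G.addEdge u v).Adj d z := by
      intro z hz
      rcases hDdom z with h | ⟨x, hx, hadj⟩
      · simp only [Finset.coe_singleton, Set.mem_singleton_iff] at h; exact absurd h hz
      · simp only [Finset.coe_singleton, Set.mem_singleton_iff] at hx; subst hx; exact hadj
    by_cases hdu : d = u
    · left
      intro z hzu hzv
      have hzd : z ≠ d := by rw [hdu]; exact hzu
      have h := hdom z hzd
      rw [addEdge_adj] at h
      rcases h with h | ⟨h, _⟩
      · rw [hdu] at h; exact Or.inl h
      · rcases h with ⟨_, h⟩ | ⟨h, _⟩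
        · exact absurd h hzv
        · rw [hdu] at h; exact absurd h.symm hne.symm
    by_cases hdv : d = v
    · left
      intro z hzu hzv
      have hzd : z ≠ d := by rw [hdv]; exact hzv
      have h := hdom z hzd
      rw [addEdge_adj] at h
      rcases h with h | ⟨h, _⟩
      · rw [hdv] at h; exact Or.inr h
      · rcases h with ⟨h, _⟩ | ⟨_, h⟩
        · rw [hdv] at h; exact absurd h hne.symm
        · exact absurd h hzu
    · exfalso
      apply no_one_cds G h3 d
      intro z hz
      have h := hdom z hz
      rw [addEdge_adj] at h
      rcases h with h | ⟨h, _⟩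
      · exact h
      · rcases h with ⟨h, _⟩ | ⟨h, _⟩
        · exact absurd h hdu
        · exact absurd h hdv
  · -- two elements
    obtain ⟨d1, d2, hd12, hd⟩ := Finset.card_eq_two.mp h2
    subst hd
    have hadj12 : (G.addEdge u v).Adj d1 d2 := by
      apply adj_of_connected_induce_pair _ hd12
      have : (↑({d1, d2} : Finset V) : Set V) = ({d1, d2} : Set V) := by simp
      rw [← this]; exact hDconn
    have hdom : ∀ z, z ≠ d1 → z ≠ d2 →
        (G.addEdge u v).Adj d1 z ∨ (G.addEdge u v).Adj d2 z := by
      intro z h1 h2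
      rcases hDdom z with h | ⟨x, hx, hadj⟩
      · simp only [Finset.coe_insert, Finset.coe_singleton, Set.mem_insert_iff,
          Set.mem_singleton_iff] at h
        rcases h with h | h <;> [exact absurd h h1; exact absurd h h2]
      · simp only [Finset.coe_insert, Finset.coe_singleton, Set.mem_insert_iff,
          Set.mem_singleton_iff] at hx
        rcases hx with hx | hx <;> subst hx
        · exact Or.inl hadj
        · exact Or.inr hadj
    have conv2 : ∀ {p q : V}, (G.addEdge u v).Adj p q → q ≠ u → q ≠ v → G.Adj p q := by
      intro p q h hqu hqv
      rw [addEdge_adj] at h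
      rcases h with h | ⟨h, _⟩
      · exact h
      · rcases h with ⟨_, h⟩ | ⟨_, h⟩
        · exact absurd h hqv
        · exact absurd h hqu
    have conv1 : ∀ {p q : V}, (G.addEdge u v).Adj p q → p ≠ u → p ≠ v → G.Adj p q := by
      intro p q h hpu hpv
      rw [addEdge_adj] at h
      rcases h with h | ⟨h, _⟩
      · exact h
      · rcases h with ⟨h, _⟩ | ⟨h, _⟩
        · exact absurd h hpu
        · exact absurd h hpv
    by_cases hu1 : u = d1
    · by_cases hv2 : v = d2
      · -- D = {u, v} : case (a)
        left
        intro z hzu hzv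
        have h := hdom z (by rw [← hu1]; exact hzu) (by rw [← hv2]; exact hzv)
        rcases h with h | h
        · exact Or.inl (by rw [hu1]; exact conv2 h hzu hzv)
        · exact Or.inr (by rw [hv2]; exact conv2 h hzu hzv)
      · -- u = d1, v ∉ D, x = d2 : HalfT u v
        have hv1 : v ≠ d1 := by rw [← hu1]; exact hne.symm
        have hxu : d2 ≠ u := by rw [hu1]; exact (Ne.symm hd12)
        have hxv : d2 ≠ v := fun h => hv2 h.symm
        have hadjux : G.Adj u d2 := by rw [hu1]; exact conv2 hadj12 hxu hxv
        have hdomg : ∀ z, z ≠ u → z ≠ v → z ≠ d2 → (G.Adj u z ∨ G.Adj d2 z) := by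
          intro z hzu hzv hzx
          have h := hdom z (by rw [← hu1]; exact hzu) hzx
          rcases h with h | h
          · exact Or.inl (by rw [hu1]; exact conv2 h hzu hzv)
          · exact Or.inr (conv2 h hzu hzv)
        have hnadjvx : ¬G.Adj v d2 := by
          intro hvx
          apply no_two_cds G h3 hadjux
          intro z hzu hzx
          by_cases hzv : z = v
          · exact Or.inr (by rw [hzv]; exact hvx.symm)
          · exact hdomg z hzu hzv hzx
        exact Or.inr (Or.inl ⟨d2, hxu, hxv, hadjux, hnadjvx, hdomg⟩)
    by_cases hu2 : u = d2
    · by_cases hv1 : v = d1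
      · -- D = {v, u} : case (a)
        left
        intro z hzu hzv
        have h := hdom z (by rw [← hv1]; exact hzv) (by rw [← hu2]; exact hzu)
        rcases h with h | h
        · exact Or.inr (by rw [hv1]; exact conv2 h hzu hzv)
        · exact Or.inl (by rw [hu2]; exact conv2 h hzu hzv)
      · -- u = d2, v ∉ D, x = d1 : HalfT u v
        have hxu : d1 ≠ u := by rw [hu2]; exact hd12
        have hxv : d1 ≠ v := fun h => hv1 h.symm
        have hadjux : G.Adj u d1 := by rw [hu2]; exact (conv1 hadj12 hxu hxv).symm
        have hdomg : ∀ z, z ≠ u → z ≠ v → z ≠ d1 → (G.Adj u z ∨ G.Adj d1 z) := by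
          intro z hzu hzv hzx
          have h := hdom z hzx (by rw [← hu2]; exact hzu)
          rcases h with h | h
          · exact Or.inr (conv2 h hzu hzv)
          · exact Or.inl (by rw [hu2]; exact conv2 h hzu hzv)
        have hnadjvx : ¬G.Adj v d1 := by
          intro hvx
          apply no_two_cds G h3 hadjux
          intro z hzu hzx
          by_cases hzv : z = v
          · exact Or.inr (by rw [hzv]; exact hvx.symm)
          · exact hdomg z hzu hzv hzx
        exact Or.inr (Or.inl ⟨d1, hxu, hxv, hadjux, hnadjvx, hdomg⟩)
    by_cases hv1 : v = d1
    · -- v = d1, u ∉ D, x = d2 : HalfT v u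
      have hxv : d2 ≠ v := by rw [hv1]; exact (Ne.symm hd12)
      have hxu : d2 ≠ u := fun h => hu2 h.symm
      have hadjvx : G.Adj v d2 := by rw [hv1]; exact conv2 hadj12 hxu hxv
      have hdomg : ∀ z, z ≠ v → z ≠ u → z ≠ d2 → (G.Adj v z ∨ G.Adj d2 z) := by
        intro z hzv hzu hzx
        have h := hdom z (by rw [← hv1]; exact hzv) hzx
        rcases h with h | h
        · exact Or.inl (by rw [hv1]; exact conv2 h hzu hzv)
        · exact Or.inr (conv2 h hzu hzv)
      have hnadjux : ¬G.Adj u d2 := by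
        intro hux
        apply no_two_cds G h3 hadjvx
        intro z hzv hzx
        by_cases hzu : z = u
        · exact Or.inr (by rw [hzu]; exact hux.symm)
        · exact hdomg z hzv hzu hzx
      refine Or.inr (Or.inr ⟨d2, hxv, hxu, hadjvx, hnadjux, ?_⟩)
      intro z hzv' hzu' hzx'
      exact hdomg z hzv' hzu' hzx' 
    by_cases hv2 : v = d2
    · -- v = d2, u ∉ D, x = d1 : HalfT v u
      have hxv : d1 ≠ v := by rw [hv2]; exact hd12
      have hxu : d1 ≠ u := fun h => hu1 h.symm
      have hadjvx : G.Adj v d1 := by rw [hv2]; exact (conv1 hadj12 hxu hxv).symm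
      have hdomg : ∀ z, z ≠ v → z ≠ u → z ≠ d1 → (G.Adj v z ∨ G.Adj d1 z) := by
        intro z hzv hzu hzx
        have h := hdom z hzx (by rw [← hv2]; exact hzv)
        rcases h with h | h
        · exact Or.inr (conv2 h hzu hzv)
        · exact Or.inl (by rw [hv2]; exact conv2 h hzu hzv)
      have hnadjux : ¬G.Adj u d1 := by
        intro hux
        apply no_two_cds G h3 hadjvx
        intro z hzv hzx
        by_cases hzu : z = u
        · exact Or.inr (by rw [hzu]; exact hux.symm)
        · exact hdomg z hzv hzu hzx
      refine Or.inr (Or.inr ⟨d1, hxv, hxu, hadjvx, hnadjux, ?_⟩)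
      intro z hzv' hzu' hzx'
      exact hdomg z hzv' hzu' hzx' 
    · -- u, v ∉ D : contradiction
      exfalso
      have h12 : G.Adj d1 d2 := conv2 hadj12 (fun h => hu2 h.symm) (fun h => hv2 h.symm)
      apply no_two_cds G h3 h12
      intro z hz1 hz2
      have h := hdom z hz1 hz2
      rcases h with h | h
      · exact Or.inl (by
          rw [addEdge_adj] at h
          rcases h with h | ⟨h, _⟩
          · exact h
          · rcases h with ⟨h, _⟩ | ⟨h, _⟩
            · exact absurd h.symm hu1
            · exact absurd h.symm hv1)
      · exact Or.inr (by
          rw [addEdge_adj] at h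
          rcases h with h | ⟨h, _⟩
          · exact h
          · rcases h with ⟨h, _⟩ | ⟨h, _⟩
            · exact absurd h.symm hu2
            · exact absurd h.symm hv2)

lemma LU (hG : G.IsCritical3) {A B : Finset V}
    (hnAB : ∀ a ∈ A, ∀ b ∈ B, ¬G.Adj a b)
    (hABd : ∀ a ∈ A, a ∉ B)
    {a0 : V} (ha0A : a0 ∈ A) (ha0N : ∀ z, G.Adj a0 z → z ∈ A)
    {b0 b1 : V} (hb0 : b0 ∈ B) (hb1 : b1 ∈ B) (hbne : b0 ≠ b1) :
    ∀ a ∈ A, a ≠ a0 → G.Adj a0 a := by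
  intro a haA hnea
  by_contra hnadj
  have hab0 : a ≠ b0 := fun h => hABd a haA (h ▸ hb0)
  have ha0b0 : a0 ≠ b0 := fun h => hABd a0 ha0A (h ▸ hb0)
  rcases trichotomy G hG hab0 (hnAB a haA b0 hb0) with h | ⟨x, hxa, hxb, hax, hnbx, hdom⟩ |
    ⟨x, hxb, hxa, hbx, hnax, hdom⟩
  · rcases h a0 (Ne.symm hnea) ha0b0 with h | h
    · exact hnadj h.symm
    · exact hnAB a0 ha0A b0 hb0 h.symm
  · have hxa0 : x ≠ a0 := fun h => hnadj (h ▸ hax).symm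
    have hxA : x ∈ A := by
      rcases hdom a0 (Ne.symm hnea) ha0b0 (Ne.symm hxa0) with h | h
      · exact absurd h.symm hnadj
      · exact ha0N x h.symm
    have hb1a : b1 ≠ a := fun h => hABd a haA (h ▸ hb1)
    have hb1x : b1 ≠ x := fun h => hABd x hxA (h ▸ hb1)
    rcases hdom b1 hb1a (Ne.symm hbne) hb1x with h | h
    · exact hnAB a haA b1 hb1 h
    · exact hnAB x hxA b1 hb1 h
  · have hxa0 : x ≠ a0 := fun h => hnAB a0 ha0A b0 hb0 ((h ▸ hbx : G.Adj b0 a0)).symm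
    have hxA : x ∈ A := by
      rcases hdom a0 (Ne.symm ha0b0).symm (Ne.symm hnea) (Ne.symm hxa0) with h | h
      · exact absurd (hnAB a0 ha0A b0 hb0) (fun hn => hn h.symm)
      · exact ha0N x h.symm
    exact hnAB x hxA b0 hb0 hbx.symm

/-- κ = 1, Case III: one side fully adjacent to the cut vertex, other side not. -/
lemma kappa1III (hG : G.IsCritical3) (h3 : G.cdn = 3) {s : V} {A B : Finset V}
    (hcov : ∀ z : V, z ∈ A ∨ z ∈ B ∨ z = s)
    (hnAB : ∀ a ∈ A, ∀ b ∈ B, ¬G.Adj a b)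
    (hABd : ∀ a ∈ A, a ∉ B) (hsA : s ∉ A) (hsB : s ∉ B)
    (hA2 : 2 ≤ A.card) (hB2 : 2 ≤ B.card)
    (hAs : ∀ a ∈ A, G.Adj s a)
    {bs : V} (hbsB : bs ∈ B) (hnsbs : ¬G.Adj s bs)
    {b0 : V} (hb0B : b0 ∈ B) (hsb0 : G.Adj s b0) : False := by
  obtain ⟨a, haA⟩ := Finset.card_pos.mp (by omega : 0 < A.card)
  have hab0 : a ≠ b0 := fun h => hABd a haA (h ▸ hb0B)
  have hsa : s ≠ a := fun h => hsA (h ▸ haA)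
  have hbsb0 : bs ≠ b0 := fun h => hnsbs (h ▸ hsb0)
  rcases trichotomy G hG hab0 (hnAB a haA b0 hb0B) with h | ⟨x, hxa, hxb, hax, hnbx, hdom⟩ |
    ⟨y, hyb, hya, hby, hnay, hdom⟩
  · -- b0 dominates B \ {b0}; 2-CDS {s, b0}
    apply no_two_cds G h3 hsb0
    intro z hzs hzb
    rcases hcov z with hz | hz | hz
    · exact Or.inl (hAs z hz)
    · by_cases hza : z = a
      · exact Or.inl (hAs z (hza ▸ haA))
      · rcases h z hza hzb with h' | h'
        · exact absurd h' (hnAB a haA z hz)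
        · exact Or.inr h'
    · exact absurd hz hzs
  · -- HalfT G a b0 : x adj a
    have hxAs : x ∈ A ∨ x = s := by
      rcases hcov x with h' | h' | h'
      · exact Or.inl h'
      · exact absurd hax (hnAB a haA x h')
      · exact Or.inr h'
    rcases hxAs with hxA | hxs
    · obtain ⟨b1, hb1B, hb1ne⟩ : ∃ b1 ∈ B, b1 ≠ b0 :=
        Finset.exists_mem_ne (by omega) b0
      have h1 : b1 ≠ a := fun h => hABd a haA (h ▸ hb1B)
      have h2 : b1 ≠ x := fun h => hABd x hxA (h ▸ hb1B)
      rcases hdom b1 h1 hb1ne h2 with h' | h'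
      · exact hnAB a haA b1 hb1B h'
      · exact hnAB x hxA b1 hb1B h'
    · subst hxs
      have h1 : bs ≠ a := fun h => hABd a haA (h ▸ hbsB)
      have h2 : bs ≠ x := fun h => hsB (h ▸ hbsB)
      rcases hdom bs h1 hbsb0 h2 with h' | h'
      · exact hnAB a haA bs hbsB h'
      · exact hnsbs h'
  · -- HalfT G b0 a : y adj b0
    have hyBs : y ∈ B ∨ y = s := by
      rcases hcov y with h' | h' | h'
      · exact absurd hby.symm (hnAB y h' b0 hb0B)
      · exact Or.inl h'
      · exact Or.inr h'
    rcases hyBs with hyB | hys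
    · obtain ⟨a1, ha1A, ha1ne⟩ : ∃ a1 ∈ A, a1 ≠ a :=
        Finset.exists_mem_ne (by omega) a
      have h1 : a1 ≠ b0 := fun h => hABd a1 ha1A (h ▸ hb0B)
      have h2 : a1 ≠ y := fun h => hABd a1 ha1A (h ▸ hyB)
      rcases hdom a1 h1 ha1ne h2 with h' | h'
      · exact hnAB a1 ha1A b0 hb0B h'.symm
      · exact hnAB a1 ha1A y hyB h'.symm
    · subst hys
      exact hnay (hAs a haA).symm

lemma branch1 [DecidableRel G.Adj] (hG : G.IsCritical3) (h3 : G.cdn = 3) {S I A B : Finset V}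
    (hind : ∀ p ∈ I, ∀ q ∈ I, p ≠ q → ¬G.Adj p q)
    (hSI : (S \ I).card ≤ 1)
    (hcov : ∀ z : V, z ∈ A ∨ z ∈ B ∨ z ∈ S)
    (hABd : ∀ a ∈ A, a ∉ B) (hAS : ∀ a ∈ A, a ∉ S) (hBS : ∀ b ∈ B, b ∉ S)
    (hnAB : ∀ a ∈ A, ∀ b ∈ B, ¬G.Adj a b)
    (hB2 : 2 ≤ B.card)
    (hdeg : ∀ v : V, S.card < G.degree v)
    (hk2 : 2 ≤ S.card)
    (hIk : S.card + 1 ≤ I.card)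
    (hIB : ∀ b ∈ B, b ∉ I) : False := by
  have hsubI : I ⊆ (I ∩ A) ∪ (I ∩ S) := by
    intro i hi
    rcases hcov i with h | h | h
    · exact Finset.mem_union_left _ (Finset.mem_inter.mpr ⟨hi, h⟩)
    · exact absurd hi (hIB i h)
    · exact Finset.mem_union_right _ (Finset.mem_inter.mpr ⟨hi, h⟩)
  have hIAcard : 1 ≤ (I ∩ A).card := by
    have h1 := Finset.card_le_card hsubI
    have h2 := Finset.card_union_le (I ∩ A) (I ∩ S)
    have h3' := Finset.card_le_card (Finset.inter_subset_right : I ∩ S ⊆ S)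
    omega
  obtain ⟨a0, ha0IA⟩ := Finset.card_pos.mp (show 0 < (I ∩ A).card by omega)
  obtain ⟨ha0I, ha0A⟩ := Finset.mem_inter.mp ha0IA
  obtain ⟨b0, hb0B⟩ := Finset.card_pos.mp (by omega : 0 < B.card)
  obtain ⟨b1, hb1B, hb1ne⟩ : ∃ b1 ∈ B, b1 ≠ b0 :=
    Finset.exists_mem_ne (by omega) b0
  -- the second stage of case 1a
  have stage2 : ∀ p q w : V, p ∈ I → p ∈ A → q ∈ I → q ∈ A → q ≠ p → w ∈ S → w ∉ I →
      ¬G.Adj p w → (∀ b ∈ B, G.Adj w b) → (∀ s ∈ S, s ∈ I → G.Adj w s) → False := by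
    intro p q w hpI hpA hqI hqA hqp hwS hwI hnpw hwB hwSI
    have hSwI : ∀ s ∈ S, s ≠ w → s ∈ I := by
      intro t htS htw
      by_contra htI
      exact htw (Finset.card_le_one.mp hSI t (Finset.mem_sdiff.mpr ⟨htS, htI⟩) w
        (Finset.mem_sdiff.mpr ⟨hwS, hwI⟩))
    have hpN : ∀ z, G.Adj p z → z ∈ A := by
      intro z hz
      rcases hcov z with h | h | h
      · exact h
      · exact absurd hz (hnAB p hpA z h)
      · by_cases hzw : z = w
        · exact absurd (hzw ▸ hz) hnpw
        · exact absurd hz (hind p hpI z (hSwI z h hzw)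
            (fun he => hAS p hpA (he ▸ h)))
    have hpb0 : p ≠ b0 := fun h => hABd p hpA (h ▸ hb0B)
    rcases trichotomy G hG hpb0 (hnAB p hpA b0 hb0B) with h | ⟨x, hx1, hx2, hpx, hnb0x, hdom⟩ |
      ⟨y, hy1, hy2, hb0y, hnpy, hdom⟩
    · rcases h q hqp (fun he => hABd q hqA (he ▸ hb0B)) with h' | h'
      · exact hind p hpI q hqI (Ne.symm hqp) h'
      · exact hnAB q hqA b0 hb0B h'.symm
    · have hxA : x ∈ A := hpN x hpx
      have h1 : b1 ≠ p := fun h => hABd p hpA (h ▸ hb1B)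
      have h2 : b1 ≠ x := fun h => hABd x hxA (h ▸ hb1B)
      rcases hdom b1 h1 hb1ne h2 with h' | h'
      · exact hnAB p hpA b1 hb1B h'
      · exact hnAB x hxA b1 hb1B h'
    · -- y adj b0, {b0,y} dominates G - p
      have hyq : y ≠ q := fun h => hnAB q hqA b0 hb0B ((h ▸ hb0y : G.Adj b0 q)).symm
      have hqb0 : q ≠ b0 := fun h => hABd q hqA (h ▸ hb0B)
      rcases hdom q hqb0 hqp (Ne.symm hyq) with h' | h'
      · exact hnAB q hqA b0 hb0B h'.symm
      · -- h' : Adj y q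
        have hyI : y ∉ I := fun hyI => hind y hyI q hqI hyq h'
        have hyS : y ∈ S := by
          rcases hcov y with h'' | h'' | h''
          · exact absurd hb0y.symm (hnAB y h'' b0 hb0B)
          · exact absurd h'.symm (hnAB q hqA y h'')
          · exact h''
        have hyw : y = w := Finset.card_le_one.mp hSI y (Finset.mem_sdiff.mpr ⟨hyS, hyI⟩) w
          (Finset.mem_sdiff.mpr ⟨hwS, hwI⟩)
        subst hyw
        have hwAm : ∀ a ∈ A, a ≠ p → G.Adj y a := by
          intro a haA hap
          have h1 : a ≠ b0 := fun h => hABd a haA (h ▸ hb0B)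
          have h2 : a ≠ y := fun h => hAS a haA (h ▸ hyS)
          rcases hdom a h1 hap h2 with h'' | h''
          · exact absurd h''.symm (hnAB a haA b0 hb0B)
          · exact h''
        have hdegp : 0 < G.degree p := by have := hdeg p; omega
        rw [SimpleGraph.degree] at hdegp
        obtain ⟨a2, ha2⟩ := Finset.card_pos.mp hdegp
        rw [SimpleGraph.mem_neighborFinset] at ha2
        have ha2A : a2 ∈ A := hpN a2 ha2
        have ha2p : a2 ≠ p := fun h => G.irrefl (h ▸ ha2)
        apply no_two_cds G h3 (hwAm a2 ha2A ha2p)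
        intro z hzw hza2
        rcases hcov z with hz | hz | hz
        · by_cases hzp : z = p
          · exact Or.inr (hzp ▸ ha2.symm)
          · exact Or.inl (hwAm z hz hzp)
        · exact Or.inl (hwB z hz)
        · by_cases hzww : z = y
          · exact absurd hzww hzw
          · exact Or.inl (hwSI z hz (hSwI z hz hzww))
  by_cases h1a : ∃ a1 ∈ I ∩ A, a1 ≠ a0
  · -- two I-vertices in A
    obtain ⟨a1, ha1IA, ha1ne⟩ := h1a
    obtain ⟨ha1I, ha1A⟩ := Finset.mem_inter.mp ha1IA
    have hb0a0 : b0 ≠ a0 := fun h => hABd a0 ha0A (h ▸ hb0B)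
    have hb0a1 : b0 ≠ a1 := fun h => hABd a1 ha1A (h ▸ hb0B)
    rcases trichotomy G hG (Ne.symm ha1ne) (hind a0 ha0I a1 ha1I (Ne.symm ha1ne)) with
      h | ⟨x, hx1, hx2, hax, hnax, hdom⟩ | ⟨x, hx1, hx2, hax, hnax, hdom⟩
    · rcases h b0 hb0a0 hb0a1 with h' | h'
      · exact hnAB a0 ha0A b0 hb0B h'
      · exact hnAB a1 ha1A b0 hb0B h'
    · -- x adj a0, ¬ x adj a1
      have hxS : x ∈ S := by
        rcases hcov x with h' | h' | h'
        · exfalso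
          have h1 : b0 ≠ x := fun h => hABd x h' (h ▸ hb0B)
          rcases hdom b0 hb0a0 hb0a1 h1 with h'' | h''
          · exact hnAB a0 ha0A b0 hb0B h''
          · exact hnAB x h' b0 hb0B h''
        · exact absurd hax (hnAB a0 ha0A x h')
        · exact h'
      have hxI : x ∉ I := fun hxI => hind a0 ha0I x hxI (fun he => hAS a0 ha0A (he ▸ hxS)) hax
      apply stage2 a1 a0 x ha1I ha1A ha0I ha0A (Ne.symm ha1ne) hxS hxI
        (fun h => hnax h)
      · intro b hbB
        have h1 : b ≠ a0 := fun h => hABd a0 ha0A (h ▸ hbB)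
        have h2 : b ≠ a1 := fun h => hABd a1 ha1A (h ▸ hbB)
        have h3'' : b ≠ x := fun h => hBS b hbB (h ▸ hxS)
        rcases hdom b h1 h2 h3'' with h' | h'
        · exact absurd h' (hnAB a0 ha0A b hbB)
        · exact h' 
      · intro t htS htI
        have h1 : t ≠ a0 := fun h => hAS a0 ha0A (h ▸ htS)
        have h2 : t ≠ a1 := fun h => hAS a1 ha1A (h ▸ htS)
        have h3'' : t ≠ x := fun h => hxI (h ▸ htI)
        rcases hdom t h1 h2 h3'' with h' | h'
        · exact absurd h' (hind a0 ha0I t htI (Ne.symm h1))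
        · exact h' 
    · -- x adj a1, ¬ x adj a0 (symmetric)
      have hxS : x ∈ S := by
        rcases hcov x with h' | h' | h'
        · exfalso
          have h1 : b0 ≠ x := fun h => hABd x h' (h ▸ hb0B)
          rcases hdom b0 hb0a1 hb0a0 h1 with h'' | h''
          · exact hnAB a1 ha1A b0 hb0B h''
          · exact hnAB x h' b0 hb0B h''
        · exact absurd hax (hnAB a1 ha1A x h')
        · exact h'
      have hxI : x ∉ I := fun hxI => hind a1 ha1I x hxI (fun he => hAS a1 ha1A (he ▸ hxS)) hax
      apply stage2 a0 a1 x ha0I ha0A ha1I ha1A ha1ne hxS hxI (fun h => hnax h)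
      · intro b hbB
        have h1 : b ≠ a1 := fun h => hABd a1 ha1A (h ▸ hbB)
        have h2 : b ≠ a0 := fun h => hABd a0 ha0A (h ▸ hbB)
        have h3'' : b ≠ x := fun h => hBS b hbB (h ▸ hxS)
        rcases hdom b h1 h2 h3'' with h' | h'
        · exact absurd h' (hnAB a1 ha1A b hbB)
        · exact h' 
      · intro t htS htI
        have h1 : t ≠ a1 := fun h => hAS a1 ha1A (h ▸ htS)
        have h2 : t ≠ a0 := fun h => hAS a0 ha0A (h ▸ htS)
        have h3'' : t ≠ x := fun h => hxI (h ▸ htI)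
        rcases hdom t h1 h2 h3'' with h' | h'
        · exact absurd h' (hind a1 ha1I t htI (Ne.symm h1))
        · exact h' 
  · -- I ∩ A = {a0} : S ⊆ I
    push_neg at h1a
    have hIA1 : (I ∩ A).card ≤ 1 :=
      Finset.card_le_one.mpr (fun a ha b hb => (h1a a ha).trans (h1a b hb).symm)
    have hISS : I ∩ S = S := by
      apply Finset.eq_of_subset_of_card_le (Finset.inter_subset_right)
      have h1 := Finset.card_le_card hsubI
      have h2 := Finset.card_union_le (I ∩ A) (I ∩ S)
      omega
    have hSsubI : ∀ t ∈ S, t ∈ I := fun t ht =>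
      (Finset.mem_inter.mp (hISS ▸ ht)).1
    have ha0N : ∀ z, G.Adj a0 z → z ∈ A := by
      intro z hz
      rcases hcov z with h | h | h
      · exact h
      · exact absurd hz (hnAB a0 ha0A z h)
      · exact absurd hz (hind a0 ha0I z (hSsubI z h) (fun he => hAS a0 ha0A (he ▸ h)))
    have hA0univ : ∀ a ∈ A, a ≠ a0 → G.Adj a0 a :=
      LU G hG hnAB hABd ha0A ha0N hb0B hb1B (Ne.symm hb1ne)
    obtain ⟨s1, hs1S, s2, hs2S, hs12⟩ := Finset.one_lt_card.mp (by omega : 1 < S.card)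
    have hs1I := hSsubI s1 hs1S
    have hs2I := hSsubI s2 hs2S
    -- inner step : given sj ∈ S with a witness xw ∈ A \ {a0} with ¬ Adj sj xw, contradiction
    have inner : ∀ sj so xw : V, sj ∈ S → so ∈ S → so ≠ sj → xw ∈ A → xw ≠ a0 →
        ¬G.Adj sj xw → False := by
      intro sj so xw hsjS hsoS hsosj hxwA hxwa0 hnsjxw
      have hsjI := hSsubI sj hsjS
      have hsoI := hSsubI so hsoS
      have ha0sj : a0 ≠ sj := fun h => hAS a0 ha0A (h ▸ hsjS)
      rcases trichotomy G hG ha0sj (hind a0 ha0I sj hsjI ha0sj) with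
        h | ⟨x, hx1, hx2, hax, hnax, hdom⟩ | ⟨q, hq1, hq2, haq, hnaq, hdom⟩
      · have h1 : so ≠ a0 := fun h => hAS a0 ha0A (h ▸ hsoS)
        rcases h so h1 hsosj with h' | h'
        · exact hind a0 ha0I so hsoI (Ne.symm h1) h'
        · exact hind sj hsjI so hsoI (Ne.symm hsosj) h'
      · -- x adj a0
        have hxA : x ∈ A := ha0N x hax
        have h1 : b0 ≠ a0 := fun h => hABd a0 ha0A (h ▸ hb0B)
        have h2 : b0 ≠ sj := fun h => hBS b0 hb0B (h ▸ hsjS)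
        have h3'' : b0 ≠ x := fun h => hABd x hxA (h ▸ hb0B)
        rcases hdom b0 h1 h2 h3'' with h' | h'
        · exact hnAB a0 ha0A b0 hb0B h'
        · exact hnAB x hxA b0 hb0B h'
      · -- q adj sj, ¬ q adj a0
        have hqB : q ∈ B := by
          rcases hcov q with h' | h' | h'
          · exact absurd ((hA0univ q h' hq2)) hnaq
          · exact h'
          · exact absurd haq (hind sj hsjI q (hSsubI q h') (Ne.symm hq1))
        have h1 : xw ≠ sj := fun h => hAS xw hxwA (h ▸ hsjS)
        have h2 : xw ≠ q := fun h => hABd xw hxwA (h ▸ hqB)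
        rcases hdom xw h1 hxwa0 h2 with h' | h'
        · exact hnsjxw h'
        · exact hnAB xw hxwA q hqB h'.symm
    -- pair (s1, s2)
    rcases trichotomy G hG hs12 (hind s1 hs1I s2 hs2I hs12) with
      h | ⟨x, hx1, hx2, hax, hnax, hdom⟩ | ⟨x, hx1, hx2, hax, hnax, hdom⟩
    · have h1 : a0 ≠ s1 := fun h => hAS a0 ha0A (h ▸ hs1S)
      have h2 : a0 ≠ s2 := fun h => hAS a0 ha0A (h ▸ hs2S)
      rcases h a0 h1 h2 with h' | h'
      · exact hind s1 hs1I a0 ha0I (Ne.symm h1) h'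
      · exact hind s2 hs2I a0 ha0I (Ne.symm h2) h'
    · -- x adj s1, ¬ x adj s2
      have hs1a0 : s1 ≠ a0 := fun h => hAS a0 ha0A (h ▸ hs1S)
      have hs2a0 : s2 ≠ a0 := fun h => hAS a0 ha0A (h ▸ hs2S)
      have hxa0 : x ≠ a0 := fun h => hind s1 hs1I a0 ha0I hs1a0 (h ▸ hax)
      have hxA : x ∈ A := by
        rcases hdom a0 (Ne.symm hs1a0) (Ne.symm hs2a0) (Ne.symm hxa0) with h' | h'
        · exact absurd h' (hind s1 hs1I a0 ha0I hs1a0)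
        · exact ha0N x h'.symm
      exact inner s2 s1 x hs2S hs1S hs12 hxA hxa0 hnax
    · -- x adj s2, ¬ x adj s1
      have hs1a0 : s1 ≠ a0 := fun h => hAS a0 ha0A (h ▸ hs1S)
      have hs2a0 : s2 ≠ a0 := fun h => hAS a0 ha0A (h ▸ hs2S)
      have hxa0 : x ≠ a0 := fun h => hind s2 hs2I a0 ha0I hs2a0 (h ▸ hax)
      have hxA : x ∈ A := by
        rcases hdom a0 (Ne.symm hs2a0) (Ne.symm hs1a0) (Ne.symm hxa0) with h' | h'
        · exact absurd h' (hind s2 hs2I a0 ha0I hs2a0)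
        · exact ha0N x h'.symm
      exact inner s1 s2 x hs1S hs2S (Ne.symm hs12) hxA hxa0 hnax

lemma branch2core [DecidableRel G.Adj] (hG : G.IsCritical3) (h3 : G.cdn = 3)
    {S I A B : Finset V}
    (hind : ∀ p ∈ I, ∀ q ∈ I, p ≠ q → ¬G.Adj p q)
    (hSI : (S \ I).card ≤ 1)
    (hcov : ∀ z : V, z ∈ A ∨ z ∈ B ∨ z ∈ S)
    (hABd : ∀ a ∈ A, a ∉ B) (hAS : ∀ a ∈ A, a ∉ S) (hBS : ∀ b ∈ B, b ∉ S)
    (hnAB : ∀ a ∈ A, ∀ b ∈ B, ¬G.Adj a b)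
    (hA2 : 2 ≤ A.card) (hB2 : 2 ≤ B.card)
    (hdeg : ∀ v : V, S.card < G.degree v)
    (hk2 : 2 ≤ S.card)
    {a0 b0 w : V}
    (ha0A : a0 ∈ A) (ha0I : a0 ∈ I) (hb0B : b0 ∈ B) (hb0I : b0 ∈ I)
    (hwS : w ∈ S) (hwI : w ∉ I)
    (hwb0 : G.Adj w b0) (hwa0 : ¬G.Adj w a0)
    (hwA : ∀ a ∈ A, a ≠ a0 → G.Adj w a)
    (hwSI : ∀ s ∈ S, s ∈ I → G.Adj w s) : G.IsG2 := by
  have hwa0ne : w ≠ a0 := fun h => hAS a0 ha0A (h ▸ hwS)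
  have hSwI : ∀ t ∈ S, t ≠ w → t ∈ I := by
    intro t htS htw
    by_contra htI
    exact htw (Finset.card_le_one.mp hSI t (Finset.mem_sdiff.mpr ⟨htS, htI⟩) w
      (Finset.mem_sdiff.mpr ⟨hwS, hwI⟩))
  have ha0N : ∀ z, G.Adj a0 z → z ∈ A := by
    intro z hz
    rcases hcov z with h | h | h
    · exact h
    · exact absurd hz (hnAB a0 ha0A z h)
    · by_cases hzw : z = w
      · exact absurd (hzw ▸ hz).symm hwa0
      · exact absurd hz (hind a0 ha0I z (hSwI z h hzw) (fun he => hAS a0 ha0A (he ▸ h)))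
  obtain ⟨b0', hb0'B⟩ := Finset.card_pos.mp (by omega : 0 < B.card)
  obtain ⟨b1', hb1'B, hb1'ne⟩ : ∃ b1' ∈ B, b1' ≠ b0' :=
    Finset.exists_mem_ne (by omega) b0'
  have ha0univ : ∀ a ∈ A, a ≠ a0 → G.Adj a0 a :=
    LU G hG hnAB hABd ha0A ha0N hb0'B hb1'B (Ne.symm hb1'ne)
  -- at most one vertex in S ∩ I
  have hIS1 : ∀ s1 ∈ S, s1 ∈ I → ∀ s2 ∈ S, s2 ∈ I → s1 = s2 := by
    intro s1 hs1S hs1I s2 hs2S hs2I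
    by_contra hne12
    have ha0s1 : a0 ≠ s1 := fun h => hAS a0 ha0A (h ▸ hs1S)
    have ha0s2 : a0 ≠ s2 := fun h => hAS a0 ha0A (h ▸ hs2S)
    have hb0s1 : b0 ≠ s1 := fun h => hBS b0 hb0B (h ▸ hs1S)
    have hb0s2 : b0 ≠ s2 := fun h => hBS b0 hb0B (h ▸ hs2S)
    rcases trichotomy G hG hne12 (hind s1 hs1I s2 hs2I hne12) with
      h | ⟨x, hx1, hx2, hax, hnax, hdom⟩ | ⟨x, hx1, hx2, hax, hnax, hdom⟩
    · rcases h a0 ha0s1 ha0s2 with h' | h'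
      · exact hind s1 hs1I a0 ha0I (Ne.symm ha0s1) h'
      · exact hind s2 hs2I a0 ha0I (Ne.symm ha0s2) h'
    · -- x adj s1
      have hxa0 : x ≠ a0 := fun h => hind s1 hs1I a0 ha0I (Ne.symm ha0s1) (h ▸ hax)
      have hxA : x ∈ A := by
        rcases hdom a0 ha0s1 ha0s2 (Ne.symm hxa0) with h' | h'
        · exact absurd h' (hind s1 hs1I a0 ha0I (Ne.symm ha0s1))
        · exact ha0N x h'.symm
      have hb0x : b0 ≠ x := fun h => hABd x hxA (h ▸ hb0B)
      rcases hdom b0 hb0s1 hb0s2 hb0x with h' | h'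
      · exact hind s1 hs1I b0 hb0I (Ne.symm hb0s1) h'
      · exact hnAB x hxA b0 hb0B h' 
    · -- x adj s2
      have hxa0 : x ≠ a0 := fun h => hind s2 hs2I a0 ha0I (Ne.symm ha0s2) (h ▸ hax)
      have hxA : x ∈ A := by
        rcases hdom a0 ha0s2 ha0s1 (Ne.symm hxa0) with h' | h'
        · exact absurd h' (hind s2 hs2I a0 ha0I (Ne.symm ha0s2))
        · exact ha0N x h'.symm
      have hb0x : b0 ≠ x := fun h => hABd x hxA (h ▸ hb0B)
      rcases hdom b0 hb0s2 hb0s1 hb0x with h' | h'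
      · exact hind s2 hs2I b0 hb0I (Ne.symm hb0s2) h'
      · exact hnAB x hxA b0 hb0B h' 
  have hSIcard : (S ∩ I).card ≤ 1 := Finset.card_le_one.mpr (fun p hp q hq =>
    hIS1 p (Finset.mem_inter.mp hp).1 (Finset.mem_inter.mp hp).2
      q (Finset.mem_inter.mp hq).1 (Finset.mem_inter.mp hq).2)
  have hsum : (S ∩ I).card + (S \ I).card = S.card := Finset.card_inter_add_card_sdiff S I
  have hS2card : S.card = 2 := by omega
  have hSIone : (S ∩ I).card = 1 := by omega
  obtain ⟨s1, hs1eq⟩ := Finset.card_eq_one.mp hSIone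
  have hs1SI : s1 ∈ S ∩ I := hs1eq ▸ Finset.mem_singleton_self s1
  have hs1S : s1 ∈ S := (Finset.mem_inter.mp hs1SI).1
  have hs1I : s1 ∈ I := (Finset.mem_inter.mp hs1SI).2
  have hS2 : ∀ z ∈ S, z = w ∨ z = s1 := by
    intro z hz
    by_cases hzw : z = w
    · exact Or.inl hzw
    · right
      have : z ∈ S ∩ I := Finset.mem_inter.mpr ⟨hz, hSwI z hz hzw⟩
      rw [hs1eq] at this
      exact Finset.mem_singleton.mp this
  have hws1ne : w ≠ s1 := fun h => hwI (h ▸ hs1I)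
  have hws1 : G.Adj w s1 := hwSI s1 hs1S hs1I
  have hs1b0ne : s1 ≠ b0 := fun h => hBS b0 hb0B (h ▸ hs1S)
  have hs1a0ne : s1 ≠ a0 := fun h => hAS a0 ha0A (h ▸ hs1S)
  have hs1b0 : ¬G.Adj s1 b0 := hind s1 hs1I b0 hb0I hs1b0ne
  have hs1a0n : ¬G.Adj s1 a0 := hind s1 hs1I a0 ha0I hs1a0ne
  have hb0N : ∀ z, G.Adj b0 z → z ∈ B ∨ z = w := by
    intro z hz
    rcases hcov z with h | h | h
    · exact absurd hz.symm (hnAB z h b0 hb0B)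
    · exact Or.inl h
    · rcases hS2 z h with h' | h'
      · exact Or.inr h'
      · exact absurd (h' ▸ hz).symm hs1b0
  -- A is a clique
  have hAcl : ∀ a ∈ A, ∀ a' ∈ A, a ≠ a' → G.Adj a a' := by
    intro a haA a' ha'A hnePQ
    by_cases ha : a = a0
    · subst ha; exact ha0univ a' ha'A (fun h => hnePQ h.symm)
    by_cases ha' : a' = a0
    · exact (ha' ▸ ha0univ a haA ha).symm
    by_contra hnadj
    have hab0 : a ≠ b0 := fun h => hABd a haA (h ▸ hb0B)
    have ha'b0 : a' ≠ b0 := fun h => hABd a' ha'A (h ▸ hb0B)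
    rcases trichotomy G hG hnePQ hnadj with
      h | ⟨x, hx1, hx2, hax, hnax, hdom⟩ | ⟨x, hx1, hx2, hax, hnax, hdom⟩
    · rcases h b0 (Ne.symm hab0) (Ne.symm ha'b0) with h' | h'
      · exact hnAB a haA b0 hb0B h'
      · exact hnAB a' ha'A b0 hb0B h'
    · -- x adj a
      have hb0x : b0 ≠ x := fun h => hnAB a haA b0 hb0B (h ▸ hax)
      have hxw : x = w := by
        rcases hdom b0 (Ne.symm hab0) (Ne.symm ha'b0) hb0x with h' | h'
        · exact absurd h' (hnAB a haA b0 hb0B)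
        · rcases hb0N x h'.symm with h'' | h''
          · exact absurd hax (hnAB a haA x h'')
          · exact h''
      exact hnax (hxw ▸ (hwA a' ha'A ha').symm)
    · -- x adj a'
      have hb0x : b0 ≠ x := fun h => hnAB a' ha'A b0 hb0B (h ▸ hax)
      have hxw : x = w := by
        rcases hdom b0 (Ne.symm ha'b0) (Ne.symm hab0) hb0x with h' | h'
        · exact absurd h' (hnAB a' ha'A b0 hb0B)
        · rcases hb0N x h'.symm with h'' | h''
          · exact absurd hax (hnAB a' ha'A x h'')
          · exact h''
      exact hnax (hxw ▸ (hwA a haA ha).symm)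
  -- B is a clique
  have hBcl : ∀ b ∈ B, ∀ b' ∈ B, b ≠ b' → G.Adj b b' := by
    intro b hbB b' hb'B hnePQ
    by_contra hnadj
    have ha0b : a0 ≠ b := fun h => hABd a0 ha0A (h ▸ hbB)
    have ha0b' : a0 ≠ b' := fun h => hABd a0 ha0A (h ▸ hb'B)
    rcases trichotomy G hG hnePQ hnadj with
      h | ⟨x, hx1, hx2, hax, hnax, hdom⟩ | ⟨x, hx1, hx2, hax, hnax, hdom⟩
    · rcases h a0 ha0b ha0b' with h' | h'
      · exact hnAB a0 ha0A b hbB h'.symm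
      · exact hnAB a0 ha0A b' hb'B h'.symm
    · have hxa0 : x ≠ a0 := fun h => hnAB a0 ha0A b hbB (h ▸ hax).symm
      rcases hdom a0 ha0b ha0b' (Ne.symm hxa0) with h' | h'
      · exact hnAB a0 ha0A b hbB h'.symm
      · exact (hnAB x (ha0N x h'.symm) b hbB hax.symm).elim
    · have hxa0 : x ≠ a0 := fun h => hnAB a0 ha0A b' hb'B (h ▸ hax).symm
      rcases hdom a0 ha0b' ha0b (Ne.symm hxa0) with h' | h'
      · exact hnAB a0 ha0A b' hb'B h'.symm
      · exact (hnAB x (ha0N x h'.symm) b' hb'B hax.symm).elim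
  -- existence of u2 : vertex of B not adjacent to w
  have hu2ex : ∃ u2 ∈ B, ¬G.Adj w u2 := by
    by_contra hall
    push_neg at hall
    obtain ⟨a2, ha2A, ha2ne⟩ : ∃ a2 ∈ A, a2 ≠ a0 :=
      Finset.exists_mem_ne (by omega) a0
    apply no_two_cds G h3 (hwA a2 ha2A ha2ne)
    intro z hzw hza2
    rcases hcov z with hz | hz | hz
    · by_cases hza0 : z = a0
      · exact Or.inr (hza0 ▸ (ha0univ a2 ha2A ha2ne).symm)
      · exact Or.inl (hwA z hz hza0)
    · exact Or.inl (hall z hz)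
    · rcases hS2 z hz with h' | h'
      · exact absurd h' hzw
      · exact Or.inl (h' ▸ hws1)
  obtain ⟨u2, hu2B, hwu2⟩ := hu2ex
  have hb0u2 : b0 ≠ u2 := fun h => hwu2 (h ▸ hwb0)
  have hwu2ne : w ≠ u2 := fun h => hBS u2 hu2B (h ▸ hwS)
  -- s1 is adjacent to all of A \ {a0} and to u2
  have hs1Adata : (∀ a ∈ A, a ≠ a0 → G.Adj s1 a) ∧ G.Adj s1 u2 := by
    have ha0u2 : a0 ≠ u2 := fun h => hABd a0 ha0A (h ▸ hu2B)
    rcases trichotomy G hG ha0u2 (hnAB a0 ha0A u2 hu2B) with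
      h | ⟨x, hx1, hx2, hax, hnax, hdom⟩ | ⟨y, hy1, hy2, hay, hnay, hdom⟩
    · exfalso
      rcases h w hwa0ne hwu2ne with h' | h'
      · exact hwa0 h'.symm
      · exact hwu2 h'.symm
    · exfalso
      have hxA : x ∈ A := ha0N x hax
      have h1 : b0 ≠ a0 := fun h => hABd a0 ha0A (h ▸ hb0B)
      have h2 : b0 ≠ x := fun h => hABd x hxA (h ▸ hb0B)
      rcases hdom b0 h1 hb0u2 h2 with h' | h'
      · exact hnAB a0 ha0A b0 hb0B h'
      · exact hnAB x hxA b0 hb0B h'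
    · -- y adj u2, ¬ y adj a0
      have hyA : y ∉ A := fun hyA => hnay (ha0univ y hyA hy2)
      have hyB : y ∉ B := by
        intro hyB
        obtain ⟨a2, ha2A, ha2ne⟩ : ∃ a2 ∈ A, a2 ≠ a0 :=
          Finset.exists_mem_ne (by omega) a0
        have h1 : a2 ≠ u2 := fun h => hABd a2 ha2A (h ▸ hu2B)
        have h2 : a2 ≠ y := fun h => hABd a2 ha2A (h ▸ hyB)
        rcases hdom a2 h1 ha2ne h2 with h' | h'
        · exact hnAB a2 ha2A u2 hu2B h'.symm
        · exact hnAB a2 ha2A y hyB h'.symm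
      have hyS : y ∈ S := by
        rcases hcov y with h' | h' | h'
        · exact absurd h' hyA
        · exact absurd h' hyB
        · exact h'
      have hys1 : y = s1 := by
        rcases hS2 y hyS with h' | h'
        · exact absurd (h' ▸ hay).symm hwu2
        · exact h'
      subst hys1
      constructor
      · intro a haA hane
        have h1 : a ≠ u2 := fun h => hABd a haA (h ▸ hu2B)
        have h2 : a ≠ y := fun h => hAS a haA (h ▸ hyS)
        rcases hdom a h1 hane h2 with h' | h'
        · exact absurd h'.symm (hnAB a haA u2 hu2B)
        · exact h' 
      · exact hay.symm
  obtain ⟨hs1A, hs1u2⟩ := hs1Adata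
  -- s1 is adjacent to all of B \ {b0}
  have hs1B : ∀ b ∈ B, b ≠ b0 → G.Adj s1 b := by
    have hb0s1ne : b0 ≠ s1 := Ne.symm hs1b0ne
    rcases trichotomy G hG hb0s1ne (fun h => hs1b0 h.symm) with
      h | ⟨x, hx1, hx2, hax, hnax, hdom⟩ | ⟨x, hx1, hx2, hax, hnax, hdom⟩
    · exfalso
      have h1 : a0 ≠ b0 := fun h => hABd a0 ha0A (h ▸ hb0B)
      rcases h a0 h1 (Ne.symm hs1a0ne) with h' | h'
      · exact hnAB a0 ha0A b0 hb0B h'.symm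
      · exact hs1a0n h'
    · exfalso
      rcases hb0N x hax with hxB | hxw
      · have h1 : a0 ≠ b0 := fun h => hABd a0 ha0A (h ▸ hb0B)
        have h2 : a0 ≠ x := fun h => hABd a0 ha0A (h ▸ hxB)
        rcases hdom a0 h1 (Ne.symm hs1a0ne) h2 with h' | h'
        · exact hnAB a0 ha0A b0 hb0B h'.symm
        · exact hnAB a0 ha0A x hxB h'.symm
      · subst hxw
        have h1 : a0 ≠ b0 := fun h => hABd a0 ha0A (h ▸ hb0B)
        rcases hdom a0 h1 (Ne.symm hs1a0ne) (Ne.symm hwa0ne) with h' | h'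
        · exact hnAB a0 ha0A b0 hb0B h'.symm
        · exact hwa0 h'
    · -- x adj s1, {s1, x} dominates G - b0
      have hxa0 : x ≠ a0 := fun h => hs1a0n (h ▸ hax)
      have hxA : x ∈ A := by
        rcases hdom a0 (Ne.symm hs1a0ne) (fun h => hABd a0 ha0A (h ▸ hb0B)) (Ne.symm hxa0)
          with h' | h'
        · exact absurd h' hs1a0n
        · exact ha0N x h'.symm
      intro b hbB hbne
      have h1 : b ≠ s1 := fun h => hBS b hbB (h ▸ hs1S)
      have h2 : b ≠ x := fun h => hABd x hxA (h ▸ hbB)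
      rcases hdom b h1 hbne h2 with h' | h'
      · exact h'
      · exact absurd h' (hnAB x hxA b hbB)
  -- w is adjacent to all of B \ {u2}
  have hwB : ∀ b ∈ B, b ≠ u2 → G.Adj w b := by
    by_contra hcon
    push_neg at hcon
    obtain ⟨u2', hu2'B, hu2'ne, hnwu2'⟩ := hcon
    have hu2w : u2 ≠ w := Ne.symm hwu2ne
    rcases trichotomy G hG hu2w (fun h => hwu2 h.symm) with
      h | ⟨x, hx1, hx2, hax, hnax, hdom⟩ | ⟨x, hx1, hx2, hax, hnax, hdom⟩
    · have h1 : a0 ≠ u2 := fun h => hABd a0 ha0A (h ▸ hu2B)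
      rcases h a0 h1 (Ne.symm hwa0ne) with h' | h'
      · exact hnAB a0 ha0A u2 hu2B h'.symm
      · exact hwa0 h'
    · -- x adj u2
      have hxa0 : x ≠ a0 := fun h => hnAB a0 ha0A u2 hu2B (h ▸ hax).symm
      have h1 : a0 ≠ u2 := fun h => hABd a0 ha0A (h ▸ hu2B)
      rcases hdom a0 h1 (Ne.symm hwa0ne) (Ne.symm hxa0) with h' | h'
      · exact hnAB a0 ha0A u2 hu2B h'.symm
      · exact hnAB x (ha0N x h'.symm) u2 hu2B hax.symm
    · -- x adj w, {w, x} dominates G - u2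
      have hxa0 : x ≠ a0 := fun h => hwa0 (h ▸ hax)
      have hxA : x ∈ A := by
        have h1 : a0 ≠ u2 := fun h => hABd a0 ha0A (h ▸ hu2B)
        rcases hdom a0 (Ne.symm hwa0ne) h1 (Ne.symm hxa0) with h' | h'
        · exact absurd h' hwa0
        · exact ha0N x h'.symm
      have h1 : u2' ≠ w := fun h => hBS u2' hu2'B (h ▸ hwS)
      have h2 : u2' ≠ x := fun h => hABd x hxA (h ▸ hu2'B)
      rcases hdom u2' h1 hu2'ne h2 with h' | h'
      · exact hnwu2' h'
      · exact hnAB x hxA u2' hu2'B h' 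
  -- sizes
  have hNa0 : G.neighborFinset a0 = A.erase a0 := by
    ext z
    rw [SimpleGraph.mem_neighborFinset, Finset.mem_erase]
    constructor
    · intro h; exact ⟨h.ne', ha0N z h⟩
    · intro h; exact ha0univ z h.2 h.1
  have hJ1card : 3 ≤ (A.erase a0).card := by
    have hd := hdeg a0
    rw [SimpleGraph.degree, hNa0] at hd
    omega
  have hB3 : 3 ≤ B.card := by
    have hsub : G.neighborFinset u2 ⊆ (B.erase u2) ∪ {s1} := by
      intro z hz
      rw [SimpleGraph.mem_neighborFinset] at hz
      rcases hcov z with h | h | h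
      · exact absurd hz.symm (hnAB z h u2 hu2B)
      · exact Finset.mem_union_left _ (Finset.mem_erase.mpr ⟨hz.ne', h⟩)
      · rcases hS2 z h with h' | h'
        · exact absurd (h' ▸ hz).symm hwu2
        · exact Finset.mem_union_right _ (by rw [h']; exact Finset.mem_singleton_self s1)
    have hcard := Finset.card_le_card hsub
    have h2 := Finset.card_union_le (B.erase u2) ({s1} : Finset V)
    have h3' : (B.erase u2).card = B.card - 1 := Finset.card_erase_of_mem hu2B
    have hd := hdeg u2
    rw [SimpleGraph.degree] at hd
    simp only [Finset.card_singleton] at h2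
    omega
  -- assemble the witness
  refine ⟨A.erase a0, B, b0, u2, w, s1, a0, hJ1card, hB3, ?_, hb0B, hu2B, ⟨?_, ?_⟩,
    ⟨?_, ?_⟩, ⟨?_, ?_⟩, hws1ne, hwa0ne, hs1a0ne, ?_, ?_⟩
  · exact Finset.disjoint_left.mpr (fun {x} hx => hABd x (Finset.mem_of_mem_erase hx))
  · exact fun h => hAS w (Finset.mem_of_mem_erase h) hwS
  · exact fun h => hBS w h hwS
  · exact fun h => hAS s1 (Finset.mem_of_mem_erase h) hs1S
  · exact fun h => hBS s1 h hs1S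
  · exact Finset.notMem_erase a0 A
  · exact hABd a0 ha0A
  · -- coverage
    intro z
    rcases hcov z with h | h | h
    · by_cases hza : z = a0
      · exact Or.inr (Or.inr (Or.inr (Or.inr hza)))
      · exact Or.inl (Finset.mem_erase.mpr ⟨hza, h⟩)
    · exact Or.inr (Or.inl h)
    · rcases hS2 z h with h' | h'
      · exact Or.inr (Or.inr (Or.inl h'))
      · exact Or.inr (Or.inr (Or.inr (Or.inl h')))
  · -- the adjacency characterisation
    intro a b
    constructor
    · intro hab
      refine ⟨hab.ne, ?_⟩
      rcases hcov a with haA | haB | haS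
      · rcases hcov b with hbA | hbB | hbS
        · by_cases ha : a = a0
          · subst ha
            exact Or.inr (Or.inr (Or.inl (Or.inl ⟨rfl, Finset.mem_erase.mpr ⟨hab.ne', hbA⟩⟩)))
          · by_cases hb : b = a0
            · subst hb
              exact Or.inr (Or.inr (Or.inr (Or.inl ⟨rfl, Finset.mem_erase.mpr ⟨hab.ne, haA⟩⟩)))
            · exact Or.inl ⟨Finset.mem_erase.mpr ⟨ha, haA⟩, Finset.mem_erase.mpr ⟨hb, hbA⟩⟩
        · exact absurd hab (hnAB a haA b hbB)
        · rcases hS2 b hbS with h' | h'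
          · subst h'
            refine Or.inr (Or.inr (Or.inr (Or.inr (Or.inr ⟨rfl, Or.inl ?_⟩))))
            exact Finset.mem_erase.mpr ⟨fun h => hwa0 (h ▸ hab).symm, haA⟩
          · subst h'
            refine Or.inr (Or.inr (Or.inr (Or.inr (Or.inl ⟨rfl, Or.inl ?_⟩))))
            exact Finset.mem_erase.mpr ⟨fun h => hs1a0n (h ▸ hab).symm, haA⟩
      · rcases hcov b with hbA | hbB | hbS
        · exact absurd hab.symm (hnAB b hbA a haB)
        · exact Or.inr (Or.inl ⟨haB, hbB⟩)
        · rcases hS2 b hbS with h' | h'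
          · subst h'
            refine Or.inr (Or.inr (Or.inr (Or.inr (Or.inr ⟨rfl, Or.inr (Or.inl ⟨haB, ?_⟩)⟩))))
            exact fun h => hwu2 (h ▸ hab).symm
          · subst h'
            refine Or.inr (Or.inr (Or.inr (Or.inr (Or.inl ⟨rfl, Or.inr (Or.inl ⟨haB, ?_⟩)⟩))))
            exact fun h => hs1b0 (h ▸ hab).symm
      · rcases hS2 a haS with h' | h'
        · subst h'
          rcases hcov b with hbA | hbB | hbS
          · refine Or.inr (Or.inr (Or.inl (Or.inr (Or.inr ⟨rfl, Or.inl ?_⟩))))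
            exact Finset.mem_erase.mpr ⟨fun h => hwa0 (h ▸ hab), hbA⟩
          · refine Or.inr (Or.inr (Or.inl (Or.inr (Or.inr ⟨rfl, Or.inr (Or.inl ⟨hbB, ?_⟩)⟩))))
            exact fun h => hwu2 (h ▸ hab)
          · rcases hS2 b hbS with h'' | h''
            · exact absurd (h'' ▸ hab) G.irrefl
            · subst h''
              exact Or.inr (Or.inr (Or.inl (Or.inr (Or.inr ⟨rfl, Or.inr (Or.inr rfl)⟩))))
        · subst h'
          rcases hcov b with hbA | hbB | hbS
          · refine Or.inr (Or.inr (Or.inl (Or.inr (Or.inl ⟨rfl, Or.inl ?_⟩))))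
            exact Finset.mem_erase.mpr ⟨fun h => hs1a0n (h ▸ hab), hbA⟩
          · refine Or.inr (Or.inr (Or.inl (Or.inr (Or.inl ⟨rfl, Or.inr (Or.inl ⟨hbB, ?_⟩)⟩))))
            exact fun h => hs1b0 (h ▸ hab)
          · rcases hS2 b hbS with h'' | h''
            · subst h''
              exact Or.inr (Or.inr (Or.inl (Or.inr (Or.inl ⟨rfl, Or.inr (Or.inr rfl)⟩))))
            · exact absurd (h'' ▸ hab) G.irrefl
    · rintro ⟨hne, hcase⟩
      rcases hcase with ⟨h1, h2⟩ | ⟨h1, h2⟩ | hh | hh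
      · exact hAcl a (Finset.mem_of_mem_erase h1) b (Finset.mem_of_mem_erase h2) hne
      · exact hBcl a h1 b h2 hne
      · rcases hh with ⟨rfl, hbJ⟩ | ⟨rfl, hsub⟩ | ⟨rfl, hsub⟩
        · obtain ⟨hbne, hbA⟩ := Finset.mem_erase.mp hbJ
          exact ha0univ b hbA hbne
        · rcases hsub with hbJ | ⟨hbB, hbne⟩ | rfl
          · obtain ⟨hbne, hbA⟩ := Finset.mem_erase.mp hbJ
            exact hs1A b hbA hbne
          · exact hs1B b hbB hbne
          · exact hws1.symm
        · rcases hsub with hbJ | ⟨hbB, hbne⟩ | rfl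
          · obtain ⟨hbne, hbA⟩ := Finset.mem_erase.mp hbJ
            exact hwA b hbA hbne
          · exact hwB b hbB hbne
          · exact hws1
      · rcases hh with ⟨rfl, haJ⟩ | ⟨rfl, hsub⟩ | ⟨rfl, hsub⟩
        · obtain ⟨hane, haA⟩ := Finset.mem_erase.mp haJ
          exact (ha0univ a haA hane).symm
        · rcases hsub with haJ | ⟨haB, hane⟩ | rfl
          · obtain ⟨hane, haA⟩ := Finset.mem_erase.mp haJ
            exact (hs1A a haA hane).symm
          · exact (hs1B a haB hane).symm
          · exact hws1
        · rcases hsub with haJ | ⟨haB, hane⟩ | rfl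
          · obtain ⟨hane, haA⟩ := Finset.mem_erase.mp haJ
            exact (hwA a haA hane).symm
          · exact (hwB a haB hane).symm
          · exact hws1.symm



end FinCDS
end Infra

theorem stmt_16 {V : Type*} [Fintype V] [Nonempty V] [DecidableEq V]
    (G : SimpleGraph V) [DecidableRel G.Adj] (hG : G.IsCritical3)
    (S I : Finset V)
    (hcut : G.IsVertexCut S) (hmins : S.card = G.conn)
    (hI : G.IsIndepSetPW ↑I) (hImax : I.card = G.indepNum')
    (ha : G.conn + 1 ≤ G.indepNum') (hkd : G.conn < G.minDegree)
    (hSI : (S \ I).card ≤ 1) :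
    G.IsG2 := by
  classical
  have h3 : G.cdn = 3 := hG.2.1
  have hdeg : ∀ v : V, S.card < G.degree v := by
    intro v
    rw [hmins]
    exact lt_of_lt_of_le hkd (G.minDegree_le_degree v)
  have hind : ∀ p ∈ I, ∀ q ∈ I, p ≠ q → ¬G.Adj p q := fun p hp q hq h =>
    hI (Finset.mem_coe.mpr hp) (Finset.mem_coe.mpr hq) h
  have hIk : S.card + 1 ≤ I.card := by rw [hmins, hImax]; exact ha
  -- S is not everything
  have hScard_lt : S.card < Fintype.card V := by
    obtain ⟨v0⟩ := (inferInstance : Nonempty V)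
    exact lt_trans (hdeg v0) (G.degree_lt_card_verts v0)
  have hSc_ne : ((↑S : Set V)ᶜ).Nonempty := by
    by_contra hno
    rw [Set.not_nonempty_iff_eq_empty, ← Set.compl_univ, compl_inj_iff] at hno
    have : (Finset.univ : Finset V) ⊆ S := fun z _ => by
      have : z ∈ (↑S : Set V) := by rw [hno]; trivial
      exact this
    have := Finset.card_le_card this
    rw [Finset.card_univ] at this
    omega
  obtain ⟨As, Bs, hAne, hBne, hU, hd, he⟩ := sep_of_not_conn G hcut hSc_ne
  set FA : Finset V := (Set.toFinite As).toFinset with hFA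
  set FB : Finset V := (Set.toFinite Bs).toFinset with hFB
  have hmemA : ∀ z : V, z ∈ FA ↔ z ∈ As := fun z => Set.Finite.mem_toFinset _
  have hmemB : ∀ z : V, z ∈ FB ↔ z ∈ Bs := fun z => Set.Finite.mem_toFinset _
  have hFAne : FA.Nonempty := by obtain ⟨a, haa⟩ := hAne; exact ⟨a, (hmemA a).mpr haa⟩
  have hFBne : FB.Nonempty := by obtain ⟨b, hbb⟩ := hBne; exact ⟨b, (hmemB b).mpr hbb⟩
  have hsubc : ∀ z : V, z ∈ As ∪ Bs → z ∉ S := by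
    intro z hz
    rw [hU] at hz
    exact hz
  have hAS : ∀ a ∈ FA, a ∉ S := fun a haa =>
    hsubc a (Set.mem_union_left _ ((hmemA a).mp haa))
  have hBS : ∀ b ∈ FB, b ∉ S := fun b hbb =>
    hsubc b (Set.mem_union_right _ ((hmemB b).mp hbb))
  have hABd : ∀ a ∈ FA, a ∉ FB := fun a haa hab =>
    hd a ((hmemA a).mp haa) ((hmemB a).mp hab)
  have hBAd : ∀ b ∈ FB, b ∉ FA := fun b hbb hba => hABd b hba hbb
  have hnAB : ∀ a ∈ FA, ∀ b ∈ FB, ¬G.Adj a b := fun a haa b hbb =>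
    he a ((hmemA a).mp haa) b ((hmemB b).mp hbb)
  have hnBA : ∀ b ∈ FB, ∀ a ∈ FA, ¬G.Adj b a := fun b hbb a haa h =>
    hnAB a haa b hbb h.symm
  have hcov : ∀ z : V, z ∈ FA ∨ z ∈ FB ∨ z ∈ S := by
    intro z
    by_cases hz : z ∈ S
    · exact Or.inr (Or.inr hz)
    · have : z ∈ As ∪ Bs := by rw [hU]; exact hz
      rcases this with h | h
      · exact Or.inl ((hmemA z).mpr h)
      · exact Or.inr (Or.inl ((hmemB z).mpr h))
  have hcovB : ∀ z : V, z ∈ FB ∨ z ∈ FA ∨ z ∈ S := by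
    intro z; rcases hcov z with h | h | h
    · exact Or.inr (Or.inl h)
    · exact Or.inl h
    · exact Or.inr (Or.inr h)
  -- both sides have at least two vertices
  have hA2 : 2 ≤ FA.card := by
    obtain ⟨a, haa⟩ := hFAne
    have hsub : G.neighborFinset a ⊆ (FA.erase a) ∪ S := by
      intro z hz
      rw [SimpleGraph.mem_neighborFinset] at hz
      rcases hcov z with h | h | h
      · exact Finset.mem_union_left _ (Finset.mem_erase.mpr ⟨hz.ne', h⟩)
      · exact absurd hz (hnAB a haa z h)
      · exact Finset.mem_union_right _ h
    have h1 := Finset.card_le_card hsub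
    have h2 := Finset.card_union_le (FA.erase a) S
    have h3' : (FA.erase a).card = FA.card - 1 := Finset.card_erase_of_mem haa
    have hd' := hdeg a
    rw [SimpleGraph.degree] at hd'
    have : 1 ≤ FA.card := Finset.card_pos.mpr ⟨a, haa⟩
    omega
  have hB2 : 2 ≤ FB.card := by
    obtain ⟨b, hbb⟩ := hFBne
    have hsub : G.neighborFinset b ⊆ (FB.erase b) ∪ S := by
      intro z hz
      rw [SimpleGraph.mem_neighborFinset] at hz
      rcases hcov z with h | h | h
      · exact absurd hz (hnBA b hbb z h)
      · exact Finset.mem_union_left _ (Finset.mem_erase.mpr ⟨hz.ne', h⟩)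
      · exact Finset.mem_union_right _ h
    have h1 := Finset.card_le_card hsub
    have h2 := Finset.card_union_le (FB.erase b) S
    have h3' : (FB.erase b).card = FB.card - 1 := Finset.card_erase_of_mem hbb
    have hd' := hdeg b
    rw [SimpleGraph.degree] at hd'
    have : 1 ≤ FB.card := Finset.card_pos.mpr ⟨b, hbb⟩
    omega
  -- κ = 0 impossible
  rcases Nat.lt_or_ge S.card 2 with hklt | hk2
  · rcases Nat.lt_or_ge S.card 1 with hk0 | hk1
    · -- κ = 0
      exfalso
      have hS0 : S = ∅ := Finset.card_eq_zero.mp (by omega)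
      apply hcut
      have : ((↑S : Set V)ᶜ) = Set.univ := by rw [hS0]; simp
      rw [this]
      exact connected_induce_univ G hG.1
    · -- κ = 1
      exfalso
      have hS1 : S.card = 1 := by omega
      obtain ⟨s, hsS⟩ := Finset.card_eq_one.mp hS1
      have hsmem : s ∈ S := hsS ▸ Finset.mem_singleton_self s
      have hcov1 : ∀ z : V, z ∈ FA ∨ z ∈ FB ∨ z = s := by
        intro z; rcases hcov z with h | h | h
        · exact Or.inl h
        · exact Or.inr (Or.inl h)
        · exact Or.inr (Or.inr (by rwa [hsS, Finset.mem_singleton] at h))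
      have hcov1B : ∀ z : V, z ∈ FB ∨ z ∈ FA ∨ z = s := by
        intro z; rcases hcov1 z with h | h | h
        · exact Or.inr (Or.inl h)
        · exact Or.inl h
        · exact Or.inr (Or.inr h)
      have hsA : s ∉ FA := fun h => hAS s h hsmem
      have hsB : s ∉ FB := fun h => hBS s h hsmem
      -- M1 : s has a neighbour in each side
      have hM1B : ∃ b ∈ FB, G.Adj s b := by
        by_contra hno
        push_neg at hno
        have hcut' : G.IsVertexCut (∅ : Finset V) := by
          apply not_connected_of_sep G (A := ↑FB) (B := ↑FA ∪ {s})
          · obtain ⟨b, hbb⟩ := hFBne; exact ⟨b, hbb⟩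
          · exact ⟨s, Set.mem_union_right _ rfl⟩
          · ext z
            simp only [Set.mem_union, Finset.mem_coe, Set.mem_singleton_iff,
              Finset.coe_empty, Set.compl_empty, Set.mem_univ, iff_true]
            rcases hcov1 z with h | h | h
            · exact Or.inr (Or.inl h)
            · exact Or.inl h
            · exact Or.inr (Or.inr h)
          · intro b hbb
            simp only [Set.mem_union, Finset.mem_coe, Set.mem_singleton_iff]
            push_neg
            exact ⟨hBAd b hbb, fun h => hsB (h ▸ hbb)⟩
          · intro b hbb y hy hadj
            simp only [Set.mem_union, Finset.mem_coe, Set.mem_singleton_iff] at hy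
            rcases hy with hy | hy
            · exact hnBA b hbb y hy hadj
            · exact hno b hbb (hy ▸ hadj).symm
        have : G.conn ≤ 0 := Nat.sInf_le ⟨∅, rfl, hcut'⟩
        omega
      have hM1A : ∃ a ∈ FA, G.Adj s a := by
        by_contra hno
        push_neg at hno
        have hcut' : G.IsVertexCut (∅ : Finset V) := by
          apply not_connected_of_sep G (A := ↑FA) (B := ↑FB ∪ {s})
          · obtain ⟨a, haa⟩ := hFAne; exact ⟨a, haa⟩
          · exact ⟨s, Set.mem_union_right _ rfl⟩
          · ext z
            simp only [Set.mem_union, Finset.mem_coe, Set.mem_singleton_iff,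
              Finset.coe_empty, Set.compl_empty, Set.mem_univ, iff_true]
            rcases hcov1 z with h | h | h
            · exact Or.inl h
            · exact Or.inr (Or.inl h)
            · exact Or.inr (Or.inr h)
          · intro a haa
            simp only [Set.mem_union, Finset.mem_coe, Set.mem_singleton_iff]
            push_neg
            exact ⟨hABd a haa, fun h => hsA (h ▸ haa)⟩
          · intro a haa y hy hadj
            simp only [Set.mem_union, Finset.mem_coe, Set.mem_singleton_iff] at hy
            rcases hy with hy | hy
            · exact hnAB a haa y hy hadj
            · exact hno a haa (hy ▸ hadj).symm
        have : G.conn ≤ 0 := Nat.sInf_le ⟨∅, rfl, hcut'⟩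
        omega
      by_cases hAall : ∀ a ∈ FA, G.Adj s a
      · by_cases hBall : ∀ b ∈ FB, G.Adj s b
        · exact no_one_cds G h3 s (fun z hz => by
            rcases hcov1 z with h | h | h
            · exact hAall z h
            · exact hBall z h
            · exact absurd h hz)
        · push_neg at hBall
          obtain ⟨bsx, hbsB, hnsbs⟩ := hBall
          obtain ⟨b0, hb0B, hsb0⟩ := hM1B
          exact kappa1III G hG h3 hcov1 hnAB hABd hsA hsB hA2 hB2 hAall hbsB hnsbs hb0B hsb0
      · push_neg at hAall
        obtain ⟨asx, hasA, hnsas⟩ := hAall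
        by_cases hBall : ∀ b ∈ FB, G.Adj s b
        · obtain ⟨a0, ha0A, hsa0⟩ := hM1A
          exact kappa1III G hG h3 hcov1B hnBA hBAd hsB hsA hB2 hA2 hBall hasA hnsas ha0A hsa0
        · push_neg at hBall
          obtain ⟨bsx, hbsB, hnsbs⟩ := hBall
          have hne' : asx ≠ bsx := fun h => hABd asx hasA (h ▸ hbsB)
          rcases trichotomy G hG hne' (hnAB asx hasA bsx hbsB) with
            h | ⟨x, hx1, hx2, hax, hnax, hdom⟩ | ⟨x, hx1, hx2, hax, hnax, hdom⟩
          · have h1 : s ≠ asx := fun h => hsA (h ▸ hasA)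
            have h2 : s ≠ bsx := fun h => hsB (h ▸ hbsB)
            rcases h s h1 h2 with h' | h'
            · exact hnsas h'.symm
            · exact hnsbs h'.symm
          · have hxA : x ∈ FA := by
              rcases hcov1 x with h' | h' | h'
              · exact h'
              · exact absurd hax (hnAB asx hasA x h')
              · exact absurd ((h' ▸ hax).symm) hnsas
            obtain ⟨b1, hb1B, hb1ne⟩ : ∃ b1 ∈ FB, b1 ≠ bsx :=
              Finset.exists_mem_ne (by omega) bsx
            have k1 : b1 ≠ asx := fun h => hABd asx hasA (h ▸ hb1B)
            have k2 : b1 ≠ x := fun h => hABd x hxA (h ▸ hb1B)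
            rcases hdom b1 k1 hb1ne k2 with h' | h'
            · exact hnAB asx hasA b1 hb1B h'
            · exact hnAB x hxA b1 hb1B h'
          · have hxB : x ∈ FB := by
              rcases hcov1 x with h' | h' | h'
              · exact absurd hax.symm (hnAB x h' bsx hbsB)
              · exact h'
              · exact absurd ((h' ▸ hax).symm) hnsbs
            obtain ⟨a1, ha1A, ha1ne⟩ : ∃ a1 ∈ FA, a1 ≠ asx :=
              Finset.exists_mem_ne (by omega) asx
            have k1 : a1 ≠ bsx := fun h => hABd a1 ha1A (h ▸ hbsB)
            have k2 : a1 ≠ x := fun h => hABd a1 ha1A (h ▸ hxB)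
            rcases hdom a1 k1 ha1ne k2 with h' | h'
            · exact hnAB a1 ha1A bsx hbsB h'.symm
            · exact hnAB a1 ha1A x hxB h'.symm
  · -- κ ≥ 2
    by_cases hIA : ∃ a ∈ FA, a ∈ I
    · by_cases hIB : ∃ b ∈ FB, b ∈ I
      · obtain ⟨a0, ha0A, ha0I⟩ := hIA
        obtain ⟨b0, hb0B, hb0I⟩ := hIB
        obtain ⟨s0, hs0SI⟩ : (S ∩ I).Nonempty := by
          have hsum : (S ∩ I).card + (S \ I).card = S.card :=
            Finset.card_inter_add_card_sdiff S I
          exact Finset.card_pos.mp (by omega)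
        have hs0S := (Finset.mem_inter.mp hs0SI).1
        have hs0I := (Finset.mem_inter.mp hs0SI).2
        have hne' : a0 ≠ b0 := fun h => hABd a0 ha0A (h ▸ hb0B)
        rcases trichotomy G hG hne' (hnAB a0 ha0A b0 hb0B) with
          h | ⟨x, hx1, hx2, hax, hnax, hdom⟩ | ⟨x, hx1, hx2, hax, hnax, hdom⟩
        · exfalso
          have h1 : s0 ≠ a0 := fun h => hAS a0 ha0A (h ▸ hs0S)
          have h2 : s0 ≠ b0 := fun h => hBS b0 hb0B (h ▸ hs0S)
          rcases h s0 h1 h2 with h' | h'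
          · exact hind a0 ha0I s0 hs0I (Ne.symm h1) h'
          · exact hind b0 hb0I s0 hs0I (Ne.symm h2) h'
        · -- x adj a0 : apply the core with the sides swapped
          have hxS : x ∈ S := by
            rcases hcov x with h' | h' | h'
            · exfalso
              obtain ⟨b1, hb1B, hb1ne⟩ : ∃ b1 ∈ FB, b1 ≠ b0 :=
                Finset.exists_mem_ne (by omega) b0
              have k1 : b1 ≠ a0 := fun h => hABd a0 ha0A (h ▸ hb1B)
              have k2 : b1 ≠ x := fun h => hABd x h' (h ▸ hb1B)
              rcases hdom b1 k1 hb1ne k2 with h'' | h''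
              · exact hnAB a0 ha0A b1 hb1B h''
              · exact hnAB x h' b1 hb1B h''
            · exact absurd hax (hnAB a0 ha0A x h')
            · exact h'
          have hxI : x ∉ I := fun hxI =>
            hind a0 ha0I x hxI (fun he' => hAS a0 ha0A (he' ▸ hxS)) hax
          have hwA' : ∀ b ∈ FB, b ≠ b0 → G.Adj x b := by
            intro b hbB hbne
            have k1 : b ≠ a0 := fun h => hABd a0 ha0A (h ▸ hbB)
            have k3 : b ≠ x := fun h => hBS b hbB (h ▸ hxS)
            rcases hdom b k1 hbne k3 with h' | h'
            · exact absurd h' (hnAB a0 ha0A b hbB)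
            · exact h'
          have hwSI' : ∀ t ∈ S, t ∈ I → G.Adj x t := by
            intro t htS htI
            have k1 : t ≠ a0 := fun h => hAS a0 ha0A (h ▸ htS)
            have k2 : t ≠ b0 := fun h => hBS b0 hb0B (h ▸ htS)
            have k3 : t ≠ x := fun h => hxI (h ▸ htI)
            rcases hdom t k1 k2 k3 with h' | h'
            · exact absurd h' (hind a0 ha0I t htI (Ne.symm k1))
            · exact h'
          exact branch2core G hG h3 hind hSI hcovB hBAd hBS hAS hnBA hB2 hA2 hdeg hk2
            hb0B hb0I ha0A ha0I hxS hxI hax.symm (fun h => hnax h.symm) hwA' hwSI'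
        · -- x adj b0 : apply the core directly
          have hxS : x ∈ S := by
            rcases hcov x with h' | h' | h'
            · exact absurd hax.symm (hnAB x h' b0 hb0B)
            · exfalso
              obtain ⟨a1, ha1A, ha1ne⟩ : ∃ a1 ∈ FA, a1 ≠ a0 :=
                Finset.exists_mem_ne (by omega) a0
              have k1 : a1 ≠ b0 := fun h => hABd a1 ha1A (h ▸ hb0B)
              have k3 : a1 ≠ x := fun h => hABd a1 ha1A (h ▸ h')
              rcases hdom a1 k1 ha1ne k3 with h'' | h''
              · exact hnAB a1 ha1A b0 hb0B h''.symm
              · exact hnAB a1 ha1A x h' h''.symm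
            · exact h'
          have hxI : x ∉ I := fun hxI =>
            hind b0 hb0I x hxI (fun he' => hBS b0 hb0B (he' ▸ hxS)) hax
          have hwA' : ∀ a ∈ FA, a ≠ a0 → G.Adj x a := by
            intro a haA hane
            have k1 : a ≠ b0 := fun h => hABd a haA (h ▸ hb0B)
            have k3 : a ≠ x := fun h => hAS a haA (h ▸ hxS)
            rcases hdom a k1 hane k3 with h' | h'
            · exact absurd h'.symm (hnAB a haA b0 hb0B)
            · exact h'
          have hwSI' : ∀ t ∈ S, t ∈ I → G.Adj x t := by
            intro t htS htI
            have k1 : t ≠ b0 := fun h => hBS b0 hb0B (h ▸ htS)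
            have k2 : t ≠ a0 := fun h => hAS a0 ha0A (h ▸ htS)
            have k3 : t ≠ x := fun h => hxI (h ▸ htI)
            rcases hdom t k1 k2 k3 with h' | h'
            · exact absurd h' (hind b0 hb0I t htI (Ne.symm k1))
            · exact h'
          exact branch2core G hG h3 hind hSI hcov hABd hAS hBS hnAB hA2 hB2 hdeg hk2
            ha0A ha0I hb0B hb0I hxS hxI hax.symm (fun h => hnax h.symm) hwA' hwSI'
      · push_neg at hIB
        exact (branch1 G hG h3 hind hSI hcov hABd hAS hBS hnAB hB2 hdeg hk2 hIk hIB).elim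
    · by_cases hIB : ∃ b ∈ FB, b ∈ I
      · push_neg at hIA
        exact (branch1 G hG h3 hind hSI hcovB hBAd hBS hAS hnBA hA2 hdeg hk2 hIk hIA).elim
      · push_neg at hIA hIB
        exfalso
        have hsubS : I ⊆ S := fun i hi => by
          rcases hcov i with h | h | h
          · exact absurd hi (hIA i h)
          · exact absurd hi (hIB i h)
          · exact h
        have := Finset.card_le_card hsubS
        omega
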